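/- Let (X, Σ) be a σ-topological space that is countably compact, Hausdorff, and Lindelöf. Then X is σ-normal. -/

import Mathlib

/-- A σ-topology on a set `X`: contains `∅` and `univ`, closed under finite
intersections and countable unions. -/
structure SigmaTopology (X : Type*) where
  IsOpen : Set X → Prop
  isOpen_empty : IsOpen ∅
  isOpen_univ : IsOpen Set.univ
  isOpen_inter : ∀ s t : Set X, IsOpen s → IsOpen t → IsOpen (s ∩ t)
  isOpen_iUnion : ∀ f : ℕ → Set X, (∀ n, IsOpen (f n)) → IsOpen (⋃ n, f n)

namespace SigmaTopology

variable {X : Type*}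

/-- A set is σ-closed if its complement is σ-open. -/
def IsClosed (T : SigmaTopology X) (s : Set X) : Prop := T.IsOpen sᶜ

/-- The σ-space is Hausdorff if distinct points have disjoint σ-open neighborhoods. -/
def Hausdorff (T : SigmaTopology X) : Prop :=
  ∀ x y : X, x ≠ y → ∃ U V : Set X, T.IsOpen U ∧ T.IsOpen V ∧ x ∈ U ∧ y ∈ V ∧ U ∩ V = ∅

/-- `K` is countably compact: every countable cover of `K` by σ-open sets has a
finite subcover. -/
def CountablyCompactOn (T : SigmaTopology X) (K : Set X) : Prop :=
  ∀ U : ℕ → Set X, (∀ n, T.IsOpen (U n)) → K ⊆ ⋃ n, U n → ∃ s : Finset ℕ, K ⊆ ⋃ n ∈ s, U n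

/-- The space is countably compact. -/
def CountablyCompact (T : SigmaTopology X) : Prop := T.CountablyCompactOn Set.univ

/-- The space is Lindelöf: every cover by σ-open sets has a countable subcover. -/
def Lindelof (T : SigmaTopology X) : Prop :=
  ∀ 𝒰 : Set (Set X), (∀ U ∈ 𝒰, T.IsOpen U) → ⋃₀ 𝒰 = Set.univ →
    ∃ 𝒱 ⊆ 𝒰, 𝒱.Countable ∧ ⋃₀ 𝒱 = Set.univ

/-- The space is σ-normal: disjoint σ-closed sets are separated by σ-open sets. -/
def Normal (T : SigmaTopology X) : Prop :=
  ∀ A B : Set X, T.IsClosed A → T.IsClosed B → A ∩ B = ∅ →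
    ∃ U V : Set X, T.IsOpen U ∧ T.IsOpen V ∧ A ⊆ U ∧ B ⊆ V ∧ U ∩ V = ∅

/-- σ-continuity of a real-valued function: preimages of open subsets of `ℝ`
are σ-open. -/
def SigmaContinuous (T : SigmaTopology X) (f : X → ℝ) : Prop :=
  ∀ U : Set ℝ, _root_.IsOpen U → T.IsOpen (f ⁻¹' U)

end SigmaTopology

/-- Convergence of a net to a point in a σ-topological space: the net is eventually in
every σ-open set containing the point. -/
def NetConvergesTo {X A : Type*} [Preorder A] (T : SigmaTopology X) (x : A → X) (l : X) :
    Prop :=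
  ∀ U : Set X, T.IsOpen U → l ∈ U → ∃ a₀ : A, ∀ a : A, a₀ ≤ a → x a ∈ U

/-- A positive bounded linear functional on `C_σ(X)`, with bound constant `C`. -/
def IsPosBddLinFunctional {X : Type*} (T : SigmaTopology X) (I : (X → ℝ) → ℝ) (C : ℝ) :
    Prop :=
  0 ≤ C ∧
  (∀ f g : X → ℝ, T.SigmaContinuous f → T.SigmaContinuous g → I (f + g) = I f + I g) ∧
  (∀ (c : ℝ) (f : X → ℝ), T.SigmaContinuous f → I (c • f) = c * I f) ∧
  (∀ f : X → ℝ, T.SigmaContinuous f → 0 ≤ f → 0 ≤ I f) ∧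
  (∀ f : X → ℝ, T.SigmaContinuous f → |I f| ≤ C * ⨆ x, |f x|)

/-- `μ₀ K = inf { I f : f ∈ C_σ(X), f ≥ χ_K }`. -/
noncomputable def mu0 {X : Type*} (T : SigmaTopology X) (I : (X → ℝ) → ℝ) (K : Set X) : ℝ :=
  sInf (I '' {f : X → ℝ | T.SigmaContinuous f ∧ ∀ x, K.indicator (fun _ => (1:ℝ)) x ≤ f x})

namespace SigmaTopology

variable {X : Type*} (T : SigmaTopology X)

lemma isOpen_union' (A B : Set X) (hA : T.IsOpen A) (hB : T.IsOpen B) :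
    T.IsOpen (A ∪ B) := by
  have : A ∪ B = ⋃ n : ℕ, if n = 0 then A else B := by
    ext x; simp only [Set.mem_iUnion, Set.mem_union]
    constructor
    · rintro (h | h)
      · exact ⟨0, by simp [h]⟩
      · exact ⟨1, by simp [h]⟩
    · rintro ⟨n, h⟩
      by_cases hn : n = 0
      · left; simpa [hn] using h
      · right; simpa [hn] using h
  rw [this]
  exact T.isOpen_iUnion _ fun n => by
    by_cases hn : n = 0 <;> simp [hn, hA, hB]

lemma isOpen_biInter_finset' {ι : Type*} (U : ι → Set X) (h : ∀ i, T.IsOpen (U i))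
    (s : Finset ι) : T.IsOpen (⋂ i ∈ s, U i) := by
  classical
  induction s using Finset.induction with
  | empty => simpa using T.isOpen_univ
  | insert _ _ hx ih =>
      rw [Finset.set_biInter_insert]
      exact T.isOpen_inter _ _ (h _) ih

lemma isOpen_biUnion_finset' {ι : Type*} (U : ι → Set X) (h : ∀ i, T.IsOpen (U i))
    (s : Finset ι) : T.IsOpen (⋃ i ∈ s, U i) := by
  classical
  induction s using Finset.induction with
  | empty => simpa using T.isOpen_empty
  | insert _ _ hx ih =>
      rw [Finset.set_biUnion_insert]
      exact T.isOpen_union' _ _ (h _) ih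

lemma compact_of_closed' (hcc : T.CountablyCompact) (hl : T.Lindelof)
    {K : Set X} (hK : T.IsClosed K) {ι : Type*} [Nonempty ι]
    (U : ι → Set X) (hU : ∀ i, T.IsOpen (U i)) (hcov : K ⊆ ⋃ i, U i) :
    ∃ t : Finset ι, K ⊆ ⋃ i ∈ t, U i := by
  classical
  set 𝒰 : Set (Set X) := Set.range U ∪ {Kᶜ} with h𝒰
  have h𝒰open : ∀ V ∈ 𝒰, T.IsOpen V := by
    rintro V (⟨i, rfl⟩ | rfl)
    · exact hU i
    · exact hK
  have h𝒰cov : ⋃₀ 𝒰 = Set.univ := by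
    ext x; simp only [Set.mem_sUnion, Set.mem_univ, iff_true]
    by_cases hx : x ∈ K
    · obtain ⟨i, hi⟩ := Set.mem_iUnion.mp (hcov hx)
      exact ⟨U i, Or.inl ⟨i, rfl⟩, hi⟩
    · exact ⟨Kᶜ, Or.inr rfl, hx⟩
  obtain ⟨𝒱, h𝒱sub, h𝒱ct, h𝒱cov⟩ := hl 𝒰 h𝒰open h𝒰cov
  rcases 𝒱.eq_empty_or_nonempty with rfl | hne
  · refine ⟨∅, fun x hx => ?_⟩
    have : x ∈ ⋃₀ (∅ : Set (Set X)) := h𝒱cov ▸ Set.mem_univ x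
    simp at this
  obtain ⟨f, hf⟩ := h𝒱ct.exists_eq_range hne
  have hfopen : ∀ n, T.IsOpen (f n) := fun n =>
    h𝒰open _ (h𝒱sub (hf ▸ Set.mem_range_self n))
  have hunivcov : Set.univ ⊆ ⋃ n, f n := by
    rw [← Set.sUnion_range, ← hf, h𝒱cov]
  obtain ⟨s, hs⟩ := hcc f hfopen hunivcov
  have hg : ∀ n, ∃ i : ι, (∃ j, U j = f n) → U i = f n := by
    intro n
    by_cases h : ∃ j, U j = f n
    · obtain ⟨j, hj⟩ := h
      exact ⟨j, fun _ => hj⟩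
    · exact ⟨Classical.arbitrary ι, fun hc => absurd hc h⟩
  choose g hgspec using hg
  refine ⟨s.image g, fun x hx => ?_⟩
  obtain ⟨n, hn, hxn⟩ := Set.mem_iUnion₂.mp (hs (Set.mem_univ x))
  have hmem : f n ∈ 𝒰 := h𝒱sub (hf ▸ Set.mem_range_self n)
  rcases hmem with ⟨i, hi⟩ | hKc
  · refine Set.mem_iUnion₂.mpr ⟨g n, Finset.mem_image_of_mem g hn, ?_⟩
    rw [hgspec n ⟨i, hi⟩]
    exact hxn
  · exact absurd hxn (by rw [hKc]; exact fun h => h hx)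

lemma sep_point_closed' (hcc : T.CountablyCompact) (hh : T.Hausdorff) (hl : T.Lindelof)
    {B : Set X} (hB : T.IsClosed B) {x : X} (hx : x ∉ B) :
    ∃ U V : Set X, T.IsOpen U ∧ T.IsOpen V ∧ x ∈ U ∧ B ⊆ V ∧ U ∩ V = ∅ := by
  classical
  rcases B.eq_empty_or_nonempty with rfl | hne
  · exact ⟨Set.univ, ∅, T.isOpen_univ, T.isOpen_empty, trivial, le_refl _, by simp⟩
  have : Nonempty ↥B := hne.to_subtype
  have hxy : ∀ y : B, x ≠ (y : X) := fun y h => hx (h ▸ y.2)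
  choose Uy Vy hUy hVy hxUy hyVy hdisj using fun y : B => hh x y (hxy y)
  have hcov : B ⊆ ⋃ y : B, Vy y := fun z hz => Set.mem_iUnion.mpr ⟨⟨z, hz⟩, hyVy _⟩
  obtain ⟨t, ht⟩ := T.compact_of_closed' hcc hl hB Vy hVy hcov
  refine ⟨⋂ y ∈ t, Uy y, ⋃ y ∈ t, Vy y, T.isOpen_biInter_finset' _ hUy t,
    T.isOpen_biUnion_finset' _ hVy t, Set.mem_biInter fun y _ => hxUy y, ht, ?_⟩
  ext z
  simp only [Set.mem_inter_iff, Set.mem_iInter, Set.mem_iUnion, Set.mem_empty_iff_false,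
    iff_false, not_and]
  rintro h1 ⟨y, hy, h2⟩
  have : z ∈ Uy y ∩ Vy y := ⟨h1 y hy, h2⟩
  rw [hdisj y] at this
  exact this

end SigmaTopology

/-- A countably compact, Hausdorff, Lindelöf σ-space is σ-normal. -/
theorem countablyCompact_lindelof_hausdorff_normal {X : Type*} (T : SigmaTopology X)
    (hcc : T.CountablyCompact) (hh : T.Hausdorff) (hl : T.Lindelof) :
    T.Normal := by
  classical
  intro A B hA hB hAB
  rcases A.eq_empty_or_nonempty with rfl | hne
  · exact ⟨∅, Set.univ, T.isOpen_empty, T.isOpen_univ, le_refl _, fun _ _ => trivial, by simp⟩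
  have : Nonempty ↥A := hne.to_subtype
  have hxB : ∀ x : A, (x : X) ∉ B := fun x hx =>
    Set.eq_empty_iff_forall_notMem.mp hAB x ⟨x.2, hx⟩
  choose Ux Vx hUx hVx hxUx hBVx hdisj using fun x : A =>
    T.sep_point_closed' hcc hh hl hB (hxB x)
  have hcov : A ⊆ ⋃ x : A, Ux x := fun z hz => Set.mem_iUnion.mpr ⟨⟨z, hz⟩, hxUx _⟩
  obtain ⟨t, ht⟩ := T.compact_of_closed' hcc hl hA Ux hUx hcov
  refine ⟨⋃ x ∈ t, Ux x, ⋂ x ∈ t, Vx x, T.isOpen_biUnion_finset' _ hUx t,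
    T.isOpen_biInter_finset' _ hVx t, ht, fun z hz => Set.mem_biInter fun x _ => hBVx x hz, ?_⟩
  ext z
  simp only [Set.mem_inter_iff, Set.mem_iUnion, Set.mem_iInter, Set.mem_empty_iff_false,
    iff_false, not_and]
  rintro ⟨x, hx, h1⟩ h2
  have : z ∈ Ux x ∩ Vx x := ⟨h1, h2 x hx⟩
  rw [hdisj x] at this
  exact this
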